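/- Let C be integrable with P(C ≥ η) > 0 and E[C | C ≥ η] = δ > 0. If additionally P(C ≥ η, C < 0) > 0, then the rule D = 1{C ≥ max(η, 0)} satisfies both E[C | D = 1] ≥ δ and C ≥ 0 on {D = 1}, and P(D = 1) < P(C ≥ η). -/

import Mathlib

open MeasureTheory

/-- Conditional mean of `C` given the event `{C ≥ t}`. -/
noncomputable def condMeanGe {Ω : Type*} [MeasurableSpace Ω] (μ : Measure Ω)
    (C : Ω → ℝ) (t : ℝ) : ℝ :=
  (∫ ω in {ω | t ≤ C ω}, C ω ∂μ) / (μ {ω | t ≤ C ω}).toReal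

/-- Multiple-constraint extension (γ = 0): truncating the cut point at `0`, i.e. using
the rule `D = 1{C ≥ max(η, 0)}`, preserves the mean constraint `E[C | D=1] ≥ δ`,
enforces `C ≥ 0` on the selected subgroup, and strictly shrinks the selected
proportion whenever patients with negative effects would otherwise be included. -/
theorem truncation_at_zero {Ω : Type*} [MeasurableSpace Ω] (μ : Measure Ω)
    [IsProbabilityMeasure μ] (C : Ω → ℝ) (hCmeas : Measurable C) (hC : Integrable C μ)
    (δ η : ℝ) (hδ : 0 < δ)
    (hη : 0 < μ {ω | η ≤ C ω}) (hmean : condMeanGe μ C η = δ)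
    (hneg : 0 < μ ({ω | η ≤ C ω} ∩ {ω | C ω < 0})) :
    δ ≤ condMeanGe μ C (max η 0) ∧
    (∀ ω, max η 0 ≤ C ω → 0 ≤ C ω) ∧
    μ {ω | max η 0 ≤ C ω} < μ {ω | η ≤ C ω} := by
  -- The negative-effect set is nonempty, so η < 0 and max η 0 = 0.
  have hne : ({ω | η ≤ C ω} ∩ {ω | C ω < 0}).Nonempty := by
    rcases Set.eq_empty_or_nonempty ({ω | η ≤ C ω} ∩ {ω | C ω < 0}) with h | h
    · rw [h] at hneg; simp at hneg
    · exact h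
  obtain ⟨ω0, hω0A, hω0N⟩ := hne
  have hηneg : η < 0 := lt_of_le_of_lt hω0A hω0N
  have hmax : max η 0 = 0 := max_eq_right hηneg.le
  rw [hmax]
  set A : Set Ω := {ω | η ≤ C ω} with hA
  set B : Set Ω := {ω | 0 ≤ C ω} with hB
  set N : Set Ω := A ∩ {ω | C ω < 0} with hN
  have hAm : MeasurableSet A := measurableSet_le measurable_const hCmeas
  have hBm : MeasurableSet B := measurableSet_le measurable_const hCmeas
  have hNm : MeasurableSet N := hAm.inter (measurableSet_lt hCmeas measurable_const)
  have hBA : B ⊆ A := fun ω hω => le_trans hηneg.le hω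
  have hdisj : Disjoint B N := by
    rw [Set.disjoint_left]
    rintro ω hωB ⟨_, hωN⟩
    have h1 : 0 ≤ C ω := hωB
    have h2 : C ω < 0 := hωN
    linarith
  have hunion : B ∪ N = A := by
    ext ω
    constructor
    · rintro (h | ⟨h, _⟩)
      · exact hBA h
      · exact h
    · intro h
      rcases le_or_gt 0 (C ω) with h0 | h0
      · exact Or.inl h0
      · exact Or.inr ⟨h, h0⟩
  -- measures
  have hAfin : μ A < ⊤ := lt_of_le_of_lt (prob_le_one) (by norm_num)
  have hBfin : μ B < ⊤ := lt_of_le_of_lt (prob_le_one) (by norm_num)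
  have hmeas_eq : μ B + μ N = μ A := by
    rw [← measure_union hdisj hNm, hunion]
  have hlt : μ B < μ A := by
    calc μ B < μ B + μ N := ENNReal.lt_add_right hBfin.ne hneg.ne'
    _ = μ A := hmeas_eq
  refine ⟨?_, fun ω h => h, hlt⟩
  -- reals
  set a : ℝ := (μ A).toReal with ha
  set b : ℝ := (μ B).toReal with hb
  have hapos : 0 < a := ENNReal.toReal_pos hη.ne' hAfin.ne
  -- integrals
  have hIB : IntegrableOn C B μ := hC.integrableOn
  have hIN : IntegrableOn C N μ := hC.integrableOn
  have hsplit : ∫ ω in A, C ω ∂μ = (∫ ω in B, C ω ∂μ) + ∫ ω in N, C ω ∂μ := by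
    rw [← hunion, setIntegral_union hdisj hNm hIB hIN]
  have hIA : ∫ ω in A, C ω ∂μ = δ * a := by
    have := hmean
    unfold condMeanGe at this
    rw [← hA] at this
    field_simp [ha] at this ⊢
    rw [div_eq_iff (show (μ A).toReal ≠ 0 from hapos.ne')] at this
    rw [ha]
    linarith [this]
  have hNneg : ∫ ω in N, C ω ∂μ ≤ 0 := by
    apply setIntegral_nonpos hNm
    intro ω hω
    exact le_of_lt hω.2
  have hIBge : δ * a ≤ ∫ ω in B, C ω ∂μ := by
    rw [hsplit] at hIA
    linarith
  have hbpos : 0 < b := by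
    rcases eq_or_ne (μ B) 0 with h0 | h0
    · exfalso
      have : ∫ ω in B, C ω ∂μ = 0 := by
        rw [Measure.restrict_eq_zero.mpr h0, integral_zero_measure]
      nlinarith
    · exact ENNReal.toReal_pos h0 hBfin.ne
  have hba : b ≤ a := by
    apply ENNReal.toReal_mono hAfin.ne (measure_mono hBA)
  unfold condMeanGe
  rw [← hB, ← hb]
  rw [le_div_iff₀ hbpos]
  nlinarith
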